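/- arXiv:2405.01343 — 2 statements merged into one kernel-verified Lean document; each statement's English description precedes it below -/
import Mathlib

section
/- Assume Hypothesis (HA), let k ≥ 1 be a natural number such that σ_per(P) = {λ e^{2πi j/k} : j = 0, 1, …, k−1}, and let g_0, …, g_{k−1} be as in the cyclic family hypothesis. For each ℓ ∈ {0,…,k−1} define f_ℓ := (1/k) Σ_{j=0}^{k−1} e^{2πi jℓ/k} g_j. Then P f_ℓ = λ e^{2πi ℓ/k} f_ℓ, and ker(P − λ e^{2πi ℓ/k}) = span_ℂ{f_ℓ} in L^∞(M,μ;ℂ). -/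
open MeasureTheory ProbabilityTheory Filter Topology

namespace QEM

noncomputable section

variable {M : Type*} [MetricSpace M] [CompactSpace M] [MeasurableSpace M] [BorelSpace M]

/-- The weighted Koopman operator on real-valued functions:
`P f (x) = e^{φ(x)} ∫ f(y) κ(x,dy)`. -/
def PR (φ : M → ℝ) (κ : Kernel M M) (f : M → ℝ) : M → ℝ :=
  fun x => Real.exp (φ x) * ∫ y, f y ∂(κ x)

/-- The weighted Koopman operator on complex-valued functions
(`P f := P(Re f) + i P(Im f)`, equivalently with the complex Bochner integral). -/
def PC (φ : M → ℝ) (κ : Kernel M M) (f : M → ℂ) : M → ℂ :=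
  fun x => (Real.exp (φ x) : ℂ) * ∫ y, f y ∂(κ x)

/-- Bounded measurable real-valued functions. -/
def BddMeas (f : M → ℝ) : Prop := Measurable f ∧ ∃ C : ℝ, ∀ x, |f x| ≤ C

/-- Bounded measurable complex-valued functions. -/
def BddMeasC (f : M → ℂ) : Prop := Measurable f ∧ ∃ C : ℝ, ∀ x, ‖f x‖ ≤ C

/-- The operator `P_g f := P (1_{g>0} · f)`. -/
def Pg (φ : M → ℝ) (κ : Kernel M M) (g : M → ℝ) : (M → ℝ) → (M → ℝ) :=
  fun f => PR φ κ (Set.indicator {x | 0 < g x} f)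

/-- Complex version of `P_g`. -/
def PgC (φ : M → ℝ) (κ : Kernel M M) (g : M → ℝ) : (M → ℂ) → (M → ℂ) :=
  fun f => PC φ κ (Set.indicator {x | 0 < g x} f)

/-- The indicator function of `{g > 0}`. -/
def oneG (g : M → ℝ) : M → ℝ := Set.indicator {x | 0 < g x} (fun _ => (1 : ℝ))

/-- The normalized restriction `μ̃` of `μ` to `{g > 0}`, i.e.
`μ̃(A) = μ(A ∩ {g>0}) / μ({g>0})`. -/
def mtilde (μ : Measure M) (g : M → ℝ) : Measure M :=
  (μ {x | 0 < g x})⁻¹ • μ.restrict {x | 0 < g x}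

/-- The root-of-unity phase `e^{2πi j/k}`. -/
def rootU (k j : ℕ) : ℂ := Complex.exp (2 * (Real.pi : ℂ) * Complex.I * (j : ℂ) / (k : ℂ))

/-- Basic standing setup: `μ` is a fully supported Borel probability measure, `κ` a
sub-Markov kernel with `κ(x,·) ≪ μ` for all `x`, and `φ` a (bounded) continuous function. -/
structure Setup (μ : Measure M) (κ : Kernel M M) (φ : M → ℝ) : Prop where
  prob : IsProbabilityMeasure μ
  fullSupp : ∀ U : Set M, IsOpen U → U.Nonempty → 0 < μ U
  subMarkov : ∀ x, κ x Set.univ ≤ 1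
  ac : ∀ x, κ x ≪ μ
  contφ : Continuous φ

/-- Hypothesis (HA): (i) `P` is strong Feller; (ii) `lam > 0` equals the spectral radius of the
induced operator `T` on `L^∞(M,μ;ℂ)` (where `T` agrees a.e. with the pointwise operator `P` on
bounded measurable representatives); (iii) the eigenspace of `P` at `lam` in `L^∞(M,μ)` is
one-dimensional, spanned by a continuous nonnegative `g ≢ 0` with `P g = lam·g` and
`∫ g dμ = μ {g>0}`; (iv) `P^*μ = lam·μ`. -/
structure HypHA (μ : Measure M) (κ : Kernel M M) (φ : M → ℝ)
    (T : Lp ℂ ⊤ μ →L[ℂ] Lp ℂ ⊤ μ) (lam : ℝ) (g : M → ℝ) : Prop where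
  setup : Setup μ κ φ
  strongFeller : ∀ f : M → ℝ, BddMeas f → Continuous (PR φ κ f)
  lam_pos : 0 < lam
  Tcompat : ∀ f : M → ℂ, BddMeasC f → ∀ F : Lp ℂ ⊤ μ, ⇑F =ᵐ[μ] f →
      ⇑(T F) =ᵐ[μ] PC φ κ f
  specRad : spectralRadius ℂ T = ENNReal.ofReal lam
  g_cont : Continuous g
  g_nonneg : ∀ x, 0 ≤ g x
  g_ne : g ≠ 0
  g_eigen : PR φ κ g = fun x => lam * g x
  g_int : ∫ x, g x ∂μ = (μ {x | 0 < g x}).toReal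
  eigen_dim : ∀ f : M → ℝ, BddMeas f → PR φ κ f =ᵐ[μ] (fun x => lam * f x) →
      ∃ c : ℝ, f =ᵐ[μ] fun x => c * g x
  Pstar : ∀ f : M → ℝ, BddMeas f → ∫ x, PR φ κ f x ∂μ = lam * ∫ x, f x ∂μ

/-- Membership in the point peripheral spectrum `σ_per(P)`:
`|α| = lam` and `P f = α f` for some nonzero `f ∈ L^∞(M,μ;ℂ)`. -/
def PerSpec (μ : Measure M) (κ : Kernel M M) (φ : M → ℝ) (lam : ℝ) (α : ℂ) : Prop :=
  ‖α‖ = lam ∧ ∃ f : M → ℂ, BddMeasC f ∧ ¬ (f =ᵐ[μ] 0) ∧ PC φ κ f =ᵐ[μ] fun x => α * f x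

/-- `σ_per(P) = {lam·e^{2πi j/k} : j = 0, …, k-1}`. -/
def PerSpecEq (μ : Measure M) (κ : Kernel M M) (φ : M → ℝ) (lam : ℝ) (k : ℕ) : Prop :=
  ∀ α : ℂ, PerSpec μ κ φ lam α ↔ ∃ j : ℕ, j < k ∧ α = (lam : ℂ) * rootU k j

/-- A family of `k` linearly independent, nonnegative, continuous functions with pairwise
disjoint supports, spanning `ker(P^k - lam^k)` in `L^∞(M,μ;ℂ)`, each of integral `μ {g>0}`. -/
structure PreFamily (μ : Measure M) (κ : Kernel M M) (φ : M → ℝ) (lam : ℝ) (g : M → ℝ)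
    (k : ℕ) (gi : Fin k → M → ℝ) : Prop where
  cont : ∀ i, Continuous (gi i)
  nonneg : ∀ i x, 0 ≤ gi i x
  indep : LinearIndependent ℝ gi
  span_ker : ∀ f : M → ℂ, BddMeasC f →
      (((PC φ κ)^[k] f) =ᵐ[μ] fun x => (lam : ℂ) ^ k * f x) ↔
        ∃ c : Fin k → ℂ, f =ᵐ[μ] fun x => ∑ i, c i * (gi i x : ℂ)
  integral : ∀ i, ∫ x, gi i x ∂μ = (μ {x | 0 < g x}).toReal
  disj : ∀ i j, i ≠ j → ∀ x, ¬ (0 < gi i x ∧ 0 < gi j x)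

/-- The cyclic family hypothesis: nonnegative continuous `g_0, …, g_{k-1}` supported in `{g>0}`
with pairwise disjoint supports, spanning `ker(P^k - lam^k)` in `L^∞(M,μ;ℂ)`, with
`∫ g_i dμ = μ {g>0}`, `P g_i = lam·g_{i-1 (mod k)}` and `g = (1/k) ∑ g_i`. -/
structure CyclicFamily (μ : Measure M) (κ : Kernel M M) (φ : M → ℝ) (lam : ℝ) (g : M → ℝ)
    (k : ℕ) [NeZero k] (gi : Fin k → M → ℝ) : Prop where
  cont : ∀ i, Continuous (gi i)
  nonneg : ∀ i x, 0 ≤ gi i x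
  supported : ∀ i x, 0 < gi i x → 0 < g x
  disj : ∀ i j, i ≠ j → ∀ x, ¬ (0 < gi i x ∧ 0 < gi j x)
  span_ker : ∀ f : M → ℂ, BddMeasC f →
      (((PC φ κ)^[k] f) =ᵐ[μ] fun x => (lam : ℂ) ^ k * f x) ↔
        ∃ c : Fin k → ℂ, f =ᵐ[μ] fun x => ∑ i, c i * (gi i x : ℂ)
  integral : ∀ i, ∫ x, gi i x ∂μ = (μ {x | 0 < g x}).toReal
  cycle : ∀ i : Fin k, PR φ κ (gi i) = fun x => lam * gi (i - 1) x
  avg : g = fun x => (1 / (k : ℝ)) * ∑ i, gi i x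

/-- The spectral decomposition hypothesis: a closed `P_g`-invariant subspace `V` of
`L^∞({g>0},μ;ℂ)` with `L^∞({g>0},μ;ℂ) = span{g_0,…,g_{k-1}} ⊕ V` and such that the spectral
radius of `P_g` restricted to `V` is `< lam` (expressed through a geometric bound on the
iterates, via Gelfand's formula). -/
structure SpecDecomp (μ : Measure M) (κ : Kernel M M) (φ : M → ℝ) (lam : ℝ) (g : M → ℝ)
    (k : ℕ) (gi : Fin k → M → ℝ) (V : Submodule ℂ (M → ℂ)) : Prop where
  meas : ∀ v ∈ V, Measurable v
  bdd : ∀ v ∈ V, ∃ C : ℝ, ∀ x, ‖v x‖ ≤ C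
  supp : ∀ v ∈ V, ∀ x, ¬ 0 < g x → v x = 0
  invariant : ∀ v ∈ V, PgC φ κ g v ∈ V
  closed : ∀ (u : ℕ → M → ℂ) (f : M → ℂ), (∀ n, u n ∈ V) → Measurable f →
      (∃ C : ℝ, ∀ x, ‖f x‖ ≤ C) → (∀ x, ¬ 0 < g x → f x = 0) →
      Tendsto (fun n => eLpNorm (u n - f) ⊤ μ) atTop (nhds 0) → f ∈ V
  decomp : ∀ f : M → ℂ, BddMeasC f → (∀ x, ¬ 0 < g x → f x = 0) →
      ∃ c : Fin k → ℂ, ∃ v ∈ V, f = fun x => (∑ i, c i * (gi i x : ℂ)) + v x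
  unique : ∀ c : Fin k → ℂ, (fun x => ∑ i, c i * (gi i x : ℂ)) ∈ V → c = 0
  gap : ∃ r : ℝ, 0 ≤ r ∧ r < lam ∧ ∃ C : ℝ, ∀ n : ℕ, ∀ v ∈ V,
      eLpNorm ((PgC φ κ g)^[n] v) ⊤ μ ≤ ENNReal.ofReal (C * r ^ n) * eLpNorm v ⊤ μ

/-- The operator `P^{k+1} - lam^{k+1}` on complex-valued functions. -/
def Qop (φ : M → ℝ) (κ : Kernel M M) (lam : ℝ) (k : ℕ) : (M → ℂ) → (M → ℂ) :=
  fun h x => (PC φ κ)^[k + 1] h x - (lam : ℂ) ^ (k + 1) * h x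

/-! ### Auxiliary lemmas for statement8 -/

lemma rootU_eq_pow (k j : ℕ) : rootU k j = rootU k 1 ^ j := by
  unfold rootU
  rw [← Complex.exp_nat_mul]
  congr 1
  push_cast
  ring

lemma rootU_pow_k (k : ℕ) (hk : k ≠ 0) : rootU k 1 ^ k = 1 := by
  rw [← rootU_eq_pow]
  unfold rootU
  have hkc : (k : ℂ) ≠ 0 := Nat.cast_ne_zero.mpr hk
  rw [show 2 * (Real.pi : ℂ) * Complex.I * (k : ℂ) / (k : ℂ) = 2 * Real.pi * Complex.I by
    field_simp]
  exact Complex.exp_two_pi_mul_I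

lemma rootU_congr (k : ℕ) (hk : k ≠ 0) {a b : ℕ} (h : a % k = b % k) :
    rootU k a = rootU k b := by
  rw [rootU_eq_pow k a, rootU_eq_pow k b, pow_eq_pow_mod a (rootU_pow_k k hk),
    pow_eq_pow_mod b (rootU_pow_k k hk), h]

lemma rootU_add (k a b : ℕ) : rootU k (a + b) = rootU k a * rootU k b := by
  rw [rootU_eq_pow k (a + b), rootU_eq_pow k a, rootU_eq_pow k b, pow_add]

lemma rootU_pow (k a n : ℕ) : rootU k a ^ n = rootU k (a * n) := by
  rw [rootU_eq_pow k a, rootU_eq_pow k (a * n), ← pow_mul]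

lemma rootU_zero (k : ℕ) : rootU k 0 = 1 := by
  unfold rootU; simp

lemma rootU_succ_mul (k : ℕ) [NeZero k] (i : Fin k) (l : ℕ) :
    rootU k ((((i + 1 : Fin k)) : ℕ) * l) = rootU k l * rootU k ((i : ℕ) * l) := by
  rw [← rootU_add]
  apply rootU_congr k (NeZero.ne k)
  have h1 : ((i + 1 : Fin k) : ℕ) ≡ (i : ℕ) + 1 [MOD k] := by
    rw [Fin.val_add, Fin.val_one']
    exact (Nat.mod_modEq _ k).trans (Nat.ModEq.add_left _ (Nat.mod_modEq 1 k))
  have h2 : ((i : ℕ) + 1) * l = l + (i : ℕ) * l := by ring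
  exact h2 ▸ h1.mul_right l

lemma PC_congr_ae {μ : Measure M} {κ : Kernel M M} {φ : M → ℝ}
    (hac : ∀ x, κ x ≪ μ) {f f' : M → ℂ} (h : f =ᵐ[μ] f') :
    PC φ κ f = PC φ κ f' := by
  funext x
  unfold PC
  congr 1
  exact integral_congr_ae (h.filter_mono ((hac x).ae_le))

lemma PC_const_mul {κ : Kernel M M} {φ : M → ℝ} (c : ℂ) (f : M → ℂ) :
    PC φ κ (fun x => c * f x) = fun x => c * PC φ κ f x := by
  funext x
  unfold PC
  rw [integral_const_mul]
  ring

lemma PC_iter_eigen {μ : Measure M} {κ : Kernel M M} {φ : M → ℝ}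
    (hac : ∀ x, κ x ≪ μ) {f : M → ℂ} {α : ℂ}
    (hf : PC φ κ f =ᵐ[μ] fun x => α * f x) (n : ℕ) :
    (PC φ κ)^[n] f =ᵐ[μ] fun x => α ^ n * f x := by
  induction n with
  | zero => simp
  | succ n ih =>
    rw [Function.iterate_succ_apply']
    rw [PC_congr_ae hac ih, PC_const_mul]
    filter_upwards [hf] with x hx
    rw [hx]
    ring

lemma integrable_ofReal_continuous {κ : Kernel M M} (hκ : ∀ x, κ x Set.univ ≤ 1)
    (h : M → ℝ) (hc : Continuous h) (x : M) :
    Integrable (fun y => (h y : ℂ)) (κ x) := by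
  haveI : IsFiniteMeasure (κ x) := ⟨lt_of_le_of_lt (hκ x) ENNReal.one_lt_top⟩
  exact integrableOn_univ.mp
    ((Complex.continuous_ofReal.comp hc).continuousOn.integrableOn_compact isCompact_univ)

lemma PC_sum {κ : Kernel M M} {φ : M → ℝ} (hκ : ∀ x, κ x Set.univ ≤ 1)
    {k : ℕ} (gi : Fin k → M → ℝ) (hcont : ∀ i, Continuous (gi i)) (c : Fin k → ℂ) :
    PC φ κ (fun x => ∑ i, c i * (gi i x : ℂ))
      = fun x => ∑ i, c i * ((PR φ κ (gi i) x : ℝ) : ℂ) := by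
  funext x
  unfold PC PR
  rw [integral_finset_sum _ (fun i _ =>
    (integrable_ofReal_continuous hκ (gi i) (hcont i) x).const_mul (c i))]
  simp only [integral_const_mul, integral_ofReal]
  rw [Finset.mul_sum]
  refine Finset.sum_congr rfl fun i _ => ?_
  rw [show (∫ a, ((gi i a : ℝ) : ℂ) ∂κ x) = ((∫ y, gi i y ∂κ x : ℝ) : ℂ) from integral_ofReal]
  push_cast
  ring

lemma indep_ae {μ : Measure M} [IsProbabilityMeasure μ]
    (full : ∀ U : Set M, IsOpen U → U.Nonempty → 0 < μ U)
    {g : M → ℝ} (hgc : Continuous g) (hgnn : ∀ x, 0 ≤ g x) (hgne : g ≠ 0)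
    {k : ℕ} {gi : Fin k → M → ℝ} (hnn : ∀ i x, 0 ≤ gi i x)
    (hdisj : ∀ i j, i ≠ j → ∀ x, ¬ (0 < gi i x ∧ 0 < gi j x))
    (hint : ∀ i, ∫ x, gi i x ∂μ = (μ {x | 0 < g x}).toReal)
    (d : Fin k → ℂ)
    (h : (fun x => ∑ i, d i * (gi i x : ℂ)) =ᵐ[μ] 0) : d = 0 := by
  have hpos : 0 < (μ {x | 0 < g x}).toReal := by
    apply ENNReal.toReal_pos
    · refine (full _ (isOpen_lt continuous_const hgc) ?_).ne'
      obtain ⟨x, hx⟩ := Function.ne_iff.mp hgne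
      exact ⟨x, lt_of_le_of_ne (hgnn x) (Ne.symm hx)⟩
    · exact measure_ne_top μ _
  funext j
  show d j = 0
  by_contra hdj
  have hgj : (fun x => gi j x) =ᵐ[μ] 0 := by
    filter_upwards [h] with x hx
    simp only [Pi.zero_apply] at hx ⊢
    by_contra hne
    have hposj : 0 < gi j x := lt_of_le_of_ne (hnn j x) (Ne.symm hne)
    have hsum : ∑ i, d i * (gi i x : ℂ) = d j * (gi j x : ℂ) := by
      refine Finset.sum_eq_single j (fun i _ hij => ?_) (by simp)
      have hzero : gi i x = 0 :=
        le_antisymm (not_lt.mp fun hpos' => hdisj i j hij x ⟨hpos', hposj⟩) (hnn i x)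
      simp [hzero]
    rw [hsum] at hx
    rcases mul_eq_zero.mp hx with h1 | h2
    · exact hdj h1
    · exact hne (by exact_mod_cast h2)
  have hzero : ∫ x, gi j x ∂μ = 0 := by
    rw [integral_congr_ae hgj]
    simp
  rw [hint j] at hzero
  exact hpos.ne' hzero

/-- **Corollary A.7.** Under Hypothesis (HA), the cyclic-family hypothesis and
`σ_per(P) = {lam e^{2πi j/k}}_{j<k}`, the functions `f_ℓ = (1/k) ∑_j e^{2πi jℓ/k} g_j` satisfy
`P f_ℓ = lam e^{2πi ℓ/k} f_ℓ` and span the corresponding eigenspaces in `L^∞(M,μ;ℂ)`. -/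
theorem statement8 (μ : Measure M) (κ : Kernel M M) (φ : M → ℝ)
    (T : Lp ℂ ⊤ μ →L[ℂ] Lp ℂ ⊤ μ) (lam : ℝ) (g : M → ℝ)
    (hHA : HypHA μ κ φ T lam g)
    (k : ℕ) [NeZero k] (hk : PerSpecEq μ κ φ lam k)
    (gi : Fin k → M → ℝ) (hgi : CyclicFamily μ κ φ lam g k gi) (ℓ : Fin k) :
    (PC φ κ (fun x => (1 / (k : ℂ)) * ∑ j : Fin k, rootU k ((j : ℕ) * (ℓ : ℕ)) * (gi j x : ℂ))
        = fun x => ((lam : ℂ) * rootU k (ℓ : ℕ)) *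
            ((1 / (k : ℂ)) * ∑ j : Fin k, rootU k ((j : ℕ) * (ℓ : ℕ)) * (gi j x : ℂ))) ∧
    (∀ f : M → ℂ, BddMeasC f →
      ((PC φ κ f =ᵐ[μ] fun x => ((lam : ℂ) * rootU k (ℓ : ℕ)) * f x) ↔
        ∃ c : ℂ, f =ᵐ[μ] fun x =>
          c * ((1 / (k : ℂ)) * ∑ j : Fin k, rootU k ((j : ℕ) * (ℓ : ℕ)) * (gi j x : ℂ)))) := by
  classical
  haveI := hHA.setup.prob
  have hk0 : (k : ℂ) ≠ 0 := Nat.cast_ne_zero.mpr (NeZero.ne k)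
  have hac := hHA.setup.ac
  have hκ := hHA.setup.subMarkov
  set ω : ℂ := rootU k (ℓ : ℕ) with hω
  set F : M → ℂ :=
    fun x => (1 / (k : ℂ)) * ∑ j : Fin k, rootU k ((j : ℕ) * (ℓ : ℕ)) * (gi j x : ℂ) with hF
  have hFeq : F = fun x =>
      ∑ j : Fin k, ((1 / (k : ℂ)) * rootU k ((j : ℕ) * (ℓ : ℕ))) * (gi j x : ℂ) := by
    funext x
    show (1 / (k : ℂ)) * ∑ j : Fin k, rootU k ((j : ℕ) * (ℓ : ℕ)) * (gi j x : ℂ) = _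
    rw [Finset.mul_sum]
    exact Finset.sum_congr rfl fun j _ => by ring
  have part1 : PC φ κ F = fun x => ((lam : ℂ) * ω) *
      ((1 / (k : ℂ)) * ∑ j : Fin k, rootU k ((j : ℕ) * (ℓ : ℕ)) * (gi j x : ℂ)) := by
    funext x
    calc PC φ κ F x
        = ∑ j : Fin k, ((1 / (k : ℂ)) * rootU k ((j : ℕ) * (ℓ : ℕ)))
            * ((PR φ κ (gi j) x : ℝ) : ℂ) := by
          rw [hFeq, PC_sum hκ gi hgi.cont]
      _ = ∑ j : Fin k, ((1 / (k : ℂ)) * rootU k ((j : ℕ) * (ℓ : ℕ)))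
            * ((lam : ℂ) * (gi (j - 1) x : ℂ)) := by
          refine Finset.sum_congr rfl fun j _ => ?_
          rw [congrFun (hgi.cycle j) x]
          push_cast
          ring
      _ = ∑ i : Fin k, ((1 / (k : ℂ)) * rootU k (((i + 1 : Fin k) : ℕ) * (ℓ : ℕ)))
            * ((lam : ℂ) * (gi i x : ℂ)) := by
          refine (Fintype.sum_equiv (Equiv.addRight (1 : Fin k)) _ _ fun i => ?_).symm
          simp [Equiv.coe_addRight, add_sub_cancel_right]
      _ = ((lam : ℂ) * ω) * ∑ i : Fin k,
            ((1 / (k : ℂ)) * rootU k ((i : ℕ) * (ℓ : ℕ))) * (gi i x : ℂ) := by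
          rw [Finset.mul_sum]
          refine Finset.sum_congr rfl fun i _ => ?_
          rw [rootU_succ_mul k i (ℓ : ℕ), hω]
          ring
      _ = ((lam : ℂ) * ω) *
            ((1 / (k : ℂ)) * ∑ j : Fin k, rootU k ((j : ℕ) * (ℓ : ℕ)) * (gi j x : ℂ)) := by
          simp only [Finset.mul_sum]
          exact Finset.sum_congr rfl fun j _ => by ring
  have hωk : ω ^ k = 1 := by
    rw [hω, rootU_pow, rootU_congr k (NeZero.ne k)
      (show ((ℓ : ℕ) * k) % k = 0 % k by simp [Nat.mul_mod_left]), rootU_zero]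
  refine ⟨part1, fun f hfB => ⟨fun hf => ?_, fun hcex => ?_⟩⟩
  · -- forward: eigenfunction is a multiple of F
    have hiter := PC_iter_eigen hac hf k
    have hpow : ((lam : ℂ) * ω) ^ k = (lam : ℂ) ^ k := by
      rw [mul_pow, hωk, mul_one]
    have hker : ∃ c : Fin k → ℂ, f =ᵐ[μ] fun x => ∑ i, c i * (gi i x : ℂ) := by
      refine (hgi.span_ker f).mp (fun _ => ?_)
      filter_upwards [hiter] with x hx
      rw [hx, hpow]
    obtain ⟨c, hc⟩ := hker
    have hPCf : ∀ x, PC φ κ f x = ∑ i, c i * ((lam : ℂ) * (gi (i - 1) x : ℂ)) := by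
      intro x
      rw [PC_congr_ae hac hc, PC_sum hκ gi hgi.cont]
      refine Finset.sum_congr rfl fun i _ => ?_
      rw [congrFun (hgi.cycle i) x]
      push_cast
      ring
    have key : (fun x => ∑ i, ((lam : ℂ) * (c (i + 1) - ω * c i)) * (gi i x : ℂ)) =ᵐ[μ] 0 := by
      filter_upwards [hf, hc] with x hx hcx
      simp only [Pi.zero_apply]
      have e1 : ∑ i, c i * ((lam : ℂ) * (gi (i - 1) x : ℂ))
          = ((lam : ℂ) * ω) * ∑ i, c i * (gi i x : ℂ) := by
        rw [← hPCf x, hx, hcx]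
      have e2 : ∑ i, ((lam : ℂ) * (c (i + 1) - ω * c i)) * (gi i x : ℂ)
          = (∑ i, c (i + 1) * ((lam : ℂ) * (gi i x : ℂ)))
            - ((lam : ℂ) * ω) * ∑ i, c i * (gi i x : ℂ) := by
        rw [Finset.mul_sum, ← Finset.sum_sub_distrib]
        exact Finset.sum_congr rfl fun i _ => by ring
      have e3 : ∑ i : Fin k, c (i + 1) * ((lam : ℂ) * (gi i x : ℂ))
          = ∑ j : Fin k, c j * ((lam : ℂ) * (gi (j - 1) x : ℂ)) :=
        Fintype.sum_equiv (Equiv.addRight (1 : Fin k)) _ _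
          (fun i => by simp [Equiv.coe_addRight, add_sub_cancel_right])
      rw [e2, e3, e1, sub_self]
    have hco := indep_ae hHA.setup.fullSupp hHA.g_cont hHA.g_nonneg hHA.g_ne
      hgi.nonneg hgi.disj hgi.integral _ key
    have hlam : (lam : ℂ) ≠ 0 := by
      exact_mod_cast (ne_of_gt hHA.lam_pos : lam ≠ 0)
    have hrec : ∀ i : Fin k, c (i + 1) = ω * c i := by
      intro i
      have h0 : (lam : ℂ) * (c (i + 1) - ω * c i) = 0 := congrFun hco i
      rcases mul_eq_zero.mp h0 with h1 | h2
      · exact absurd h1 hlam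
      · exact sub_eq_zero.mp h2
    open Fin.NatCast in
    have hcform : ∀ n : ℕ, c ((n : Fin k)) = rootU k (n * (ℓ : ℕ)) * c 0 := by
      intro n
      induction n with
      | zero => simp [rootU_zero]
      | succ n ih =>
        have hcast : ((n + 1 : ℕ) : Fin k) = ((n : ℕ) : Fin k) + 1 := by push_cast; ring
        rw [hcast, hrec, ih,
          show (n + 1) * (ℓ : ℕ) = (ℓ : ℕ) + n * (ℓ : ℕ) by ring, rootU_add, hω]
        ring
    open Fin.NatCast in
    have hcform' : ∀ i : Fin k, c i = rootU k ((i : ℕ) * (ℓ : ℕ)) * c 0 := fun i => by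
      have := hcform (i : ℕ)
      rwa [Fin.cast_val_eq_self] at this
    refine ⟨(k : ℂ) * c 0, ?_⟩
    filter_upwards [hc] with x hcx
    rw [hcx]
    show ∑ i, c i * (gi i x : ℂ)
        = ((k : ℂ) * c 0) * ((1 / (k : ℂ)) * ∑ j : Fin k, rootU k ((j : ℕ) * (ℓ : ℕ)) * (gi j x : ℂ))
    rw [Finset.mul_sum, Finset.mul_sum]
    refine Finset.sum_congr rfl fun i _ => ?_
    rw [hcform' i]
    field_simp
  · -- converse
    obtain ⟨c, hc⟩ := hcex
    rw [PC_congr_ae hac hc, PC_const_mul, ← hF, part1]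
    filter_upwards [hc] with x hcx
    rw [hcx]
    ring
end

end QEM
end

section
/- Assume Hypothesis (HA) and let k ≥ 1 be a natural number such that σ_per(P) = {λ e^{2πi j/k} : j = 0, 1, …, k−1}. Then for every α ∈ ℂ with |α| = 1: ker(P^{k+1} − λ^{k+1} α) ≠ {0} in L^∞(M,μ;ℂ) if and only if ker(P − λ α) ≠ {0}. Consequently the unimodular point spectra of λ^{-1}P and λ^{-(k+1)}P^{k+1} coincide (both equal the set of k-th roots of unity). -/
open MeasureTheory ProbabilityTheory Filter Topology

namespace QEM

noncomputable section

variable {M : Type*} [MetricSpace M] [CompactSpace M] [MeasurableSpace M] [BorelSpace M]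

/-- Auxiliary: each `κ x` is a finite measure. -/
lemma Setup.finiteKernel {μ : Measure M} {κ : Kernel M M} {φ : M → ℝ}
    (hS : Setup μ κ φ) (x : M) : IsFiniteMeasure (κ x) :=
  ⟨lt_of_le_of_lt (hS.subMarkov x) ENNReal.one_lt_top⟩

lemma BddMeasC.integrable {μ : Measure M} {κ : Kernel M M} {φ : M → ℝ}
    (hS : Setup μ κ φ) {f : M → ℂ} (hf : BddMeasC f) (x : M) :
    Integrable f (κ x) := by
  obtain ⟨hm, C, hC⟩ := hf
  have := hS.finiteKernel x
  exact ⟨hm.aestronglyMeasurable, HasFiniteIntegral.of_bounded (ae_of_all _ hC)⟩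

lemma PC_congr {μ : Measure M} {κ : Kernel M M} {φ : M → ℝ}
    (hS : Setup μ κ φ) {f f' : M → ℂ} (h : f =ᵐ[μ] f') :
    PC φ κ f = PC φ κ f' := by
  funext x
  unfold PC
  congr 1
  exact integral_congr_ae (h.filter_mono (Measure.ae_le_iff_absolutelyContinuous.2 (hS.ac x)))

lemma PC_sum_s14 {μ : Measure M} {κ : Kernel M M} {φ : M → ℝ}
    (hS : Setup μ κ φ) (F : ℕ → M → ℂ) (hF : ∀ m, BddMeasC (F m)) (c : ℕ → ℂ) (n : ℕ) :
    PC φ κ (fun x => ∑ m ∈ Finset.range n, c m * F m x)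
      = fun x => ∑ m ∈ Finset.range n, c m * PC φ κ (F m) x := by
  funext x
  unfold PC
  rw [integral_finset_sum _ (fun m _ => (((hF m).integrable hS x).const_mul (c m))),
    Finset.mul_sum]
  refine Finset.sum_congr rfl fun m _ => ?_
  rw [integral_const_mul]
  ring

lemma bddMeasC_zero : BddMeasC (fun _ : M => (0 : ℂ)) :=
  ⟨measurable_const, 0, by simp⟩

lemma BddMeasC.constMul {f : M → ℂ} (hf : BddMeasC f) (c : ℂ) :
    BddMeasC (fun x => c * f x) := by
  obtain ⟨hm, C, hC⟩ := hf
  exact ⟨hm.const_mul c, ‖c‖ * C, fun x => by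
    rw [norm_mul]; exact mul_le_mul_of_nonneg_left (hC x) (norm_nonneg c)⟩

lemma BddMeasC.add {f h : M → ℂ} (hf : BddMeasC f) (hh : BddMeasC h) :
    BddMeasC (fun x => f x + h x) := by
  obtain ⟨hm, C, hC⟩ := hf
  obtain ⟨hm', D, hD⟩ := hh
  exact ⟨hm.add hm', C + D, fun x =>
    (norm_add_le _ _).trans (add_le_add (hC x) (hD x))⟩

lemma bddMeasC_sum (F : ℕ → M → ℂ) (hF : ∀ m, BddMeasC (F m)) (c : ℕ → ℂ) (n : ℕ) :
    BddMeasC (fun x => ∑ m ∈ Finset.range n, c m * F m x) := by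
  induction n with
  | zero => simpa using bddMeasC_zero
  | succ n ih =>
    simp only [Finset.sum_range_succ]
    exact ih.add ((hF n).constMul (c n))

lemma bddMeasC_PC {μ : Measure M} {κ : Kernel M M} {φ : M → ℝ}
    (hS : Setup μ κ φ) (hSF : ∀ f : M → ℝ, BddMeas f → Continuous (PR φ κ f))
    {f : M → ℂ} (hf : BddMeasC f) : BddMeasC (PC φ κ f) := by
  obtain ⟨hm, C, hC⟩ := hf
  have hre : BddMeas (fun y => (f y).re) :=
    ⟨Complex.measurable_re.comp hm, C, fun x =>
      le_trans (Complex.abs_re_le_norm _) (hC x)⟩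
  have him : BddMeas (fun y => (f y).im) :=
    ⟨Complex.measurable_im.comp hm, C, fun x =>
      le_trans (Complex.abs_im_le_norm _) (hC x)⟩
  have hdecomp : PC φ κ f = fun x =>
      (PR φ κ (fun y => (f y).re) x : ℂ) + (PR φ κ (fun y => (f y).im) x : ℂ) * Complex.I := by
    funext x
    have hint : Integrable f (κ x) := BddMeasC.integrable hS ⟨hm, C, hC⟩ x
    have h2 : ((∫ y, (f y).re ∂(κ x) : ℝ) : ℂ) + ((∫ y, (f y).im ∂(κ x) : ℝ) : ℂ) * Complex.I
        = ∫ y, f y ∂(κ x) := integral_re_add_im hint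
    unfold PC PR
    rw [← h2]
    push_cast
    ring
  constructor
  · rw [hdecomp]
    exact ((Complex.measurable_ofReal.comp ((hSF _ hre).measurable)).add
      ((Complex.measurable_ofReal.comp ((hSF _ him).measurable)).mul_const _))
  · obtain ⟨B, hB⟩ := (isCompact_range ((Real.continuous_exp.comp hS.contφ))).bddAbove
    refine ⟨B * max C 0, fun x => ?_⟩
    have hBx : Real.exp (φ x) ≤ B := hB ⟨x, rfl⟩
    have hInt : ‖∫ y, f y ∂(κ x)‖ ≤ max C 0 := by
      have := hS.finiteKernel x
      calc ‖∫ y, f y ∂(κ x)‖ ≤ max C 0 * ((κ x) Set.univ).toReal :=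
            norm_integral_le_of_norm_le_const
              (ae_of_all _ fun y => (hC y).trans (le_max_left _ _))
        _ ≤ max C 0 * 1 := by
            refine mul_le_mul_of_nonneg_left ?_ (le_max_right _ _)
            have h1 : ((κ x) Set.univ).toReal ≤ (1 : ENNReal).toReal :=
              ENNReal.toReal_mono (by simp) (hS.subMarkov x)
            simpa using h1
        _ = max C 0 := mul_one _
    calc ‖PC φ κ f x‖ = Real.exp (φ x) * ‖∫ y, f y ∂(κ x)‖ := by
          unfold PC
          rw [norm_mul, Complex.norm_real, Real.norm_eq_abs,
            abs_of_pos (Real.exp_pos _)]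
      _ ≤ B * max C 0 :=
          mul_le_mul hBx hInt (norm_nonneg _) (le_trans (Real.exp_pos _).le hBx)

lemma bddMeasC_iter {μ : Measure M} {κ : Kernel M M} {φ : M → ℝ}
    (hS : Setup μ κ φ) (hSF : ∀ f : M → ℝ, BddMeas f → Continuous (PR φ κ f))
    {f : M → ℂ} (hf : BddMeasC f) (m : ℕ) : BddMeasC ((PC φ κ)^[m] f) := by
  induction m with
  | zero => simpa using hf
  | succ m ih =>
    rw [Function.iterate_succ_apply']
    exact bddMeasC_PC hS hSF ih

lemma iter_eigen {μ : Measure M} {κ : Kernel M M} {φ : M → ℝ}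
    (hS : Setup μ κ φ) {f : M → ℂ} {a : ℂ}
    (h : PC φ κ f =ᵐ[μ] fun x => a * f x) (m : ℕ) :
    (PC φ κ)^[m] f =ᵐ[μ] fun x => a ^ m * f x := by
  induction m with
  | zero => simp
  | succ m ih =>
    rw [Function.iterate_succ_apply', PC_congr hS ih, PC_const_mul]
    filter_upwards [h] with x hx
    rw [hx]
    ring

lemma norm_one_of_pow {t : ℝ} (ht : 0 ≤ t) {n : ℕ} (hn : n ≠ 0) (h : t ^ n = 1) : t = 1 := by
  rcases lt_trichotomy t 1 with h1 | h1 | h1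
  · have := pow_lt_one₀ ht h1 hn
    rw [h] at this
    norm_num at this
  · exact h1
  · have := one_lt_pow₀ h1 hn
    rw [h] at this
    norm_num at this

lemma rootU_pow_self {k : ℕ} (hk : k ≠ 0) (j : ℕ) : rootU k j ^ k = 1 := by
  have hkc : (k : ℂ) ≠ 0 := Nat.cast_ne_zero.2 hk
  have h1 : rootU k j ^ k
      = Complex.exp ((k : ℂ) * (2 * (Real.pi : ℂ) * Complex.I * (j : ℂ) / (k : ℂ))) := by
    rw [rootU, ← Complex.exp_nat_mul]
  have h2 : (k : ℂ) * (2 * (Real.pi : ℂ) * Complex.I * (j : ℂ) / (k : ℂ))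
      = ((j : ℤ) : ℂ) * (2 * (Real.pi : ℂ) * Complex.I) := by
    push_cast
    field_simp
  rw [h1, h2, Complex.exp_int_mul_two_pi_mul_I]

lemma cyclic_alg {β : ℂ} (hβ : β ≠ 0) (k : ℕ) (u : ℕ → ℂ) (hu : u (k+1) = β ^ (k+1) * u 0) :
    ∑ m ∈ Finset.range (k+1), β⁻¹ ^ m * u (m+1)
      = β * ∑ m ∈ Finset.range (k+1), β⁻¹ ^ m * u m := by
  have e1 : ∑ m ∈ Finset.range (k+1), β⁻¹ ^ m * u (m+1)
      = (∑ m ∈ Finset.range k, β⁻¹ ^ m * u (m+1)) + β⁻¹ ^ k * (β ^ (k+1) * u 0) := by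
    rw [Finset.sum_range_succ, hu]
  have e2 : β * ∑ m ∈ Finset.range (k+1), β⁻¹ ^ m * u m
      = (∑ m ∈ Finset.range k, β * (β⁻¹ ^ (m+1) * u (m+1))) + β * (β⁻¹ ^ 0 * u 0) := by
    rw [Finset.mul_sum, Finset.sum_range_succ']
  rw [e1, e2]
  congr 1
  · refine Finset.sum_congr rfl fun m _ => ?_
    rw [pow_succ', mul_assoc β⁻¹ (β⁻¹ ^ m) (u (m+1))]
    exact (mul_inv_cancel_left₀ hβ _).symm
  · rw [pow_zero, one_mul, pow_succ, mul_assoc, inv_pow]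
    exact inv_mul_cancel_left₀ (pow_ne_zero k hβ) _

/-- **Step 1 of Lemma A.3.** Under Hypothesis (HA) with
`σ_per(P) = {lam e^{2πi j/k}}_{j<k}`: for every unimodular `α`, the operator `P^{k+1}` has a
nonzero eigenfunction in `L^∞(M,μ;ℂ)` for the eigenvalue `lam^{k+1} α` iff `P` has one for
`lam α`. -/
theorem statement14 (μ : Measure M) (κ : Kernel M M) (φ : M → ℝ)
    (T : Lp ℂ ⊤ μ →L[ℂ] Lp ℂ ⊤ μ) (lam : ℝ) (g : M → ℝ)
    (hHA : HypHA μ κ φ T lam g)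
    (k : ℕ) (hk1 : 1 ≤ k) (hk : PerSpecEq μ κ φ lam k) :
    ∀ α : ℂ, ‖α‖ = 1 →
      ((∃ f : M → ℂ, BddMeasC f ∧ ¬ (f =ᵐ[μ] 0) ∧
          (PC φ κ)^[k + 1] f =ᵐ[μ] fun x => (lam : ℂ) ^ (k + 1) * α * f x) ↔
        (∃ f : M → ℂ, BddMeasC f ∧ ¬ (f =ᵐ[μ] 0) ∧
          PC φ κ f =ᵐ[μ] fun x => (lam : ℂ) * α * f x)) := by
  obtain hS := hHA.setup
  have hSF := hHA.strongFeller
  have hlam0 : (lam : ℂ) ≠ 0 := Complex.ofReal_ne_zero.2 (ne_of_gt hHA.lam_pos)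
  intro α hα
  constructor
  · -- hard direction
    rintro ⟨f, hf, hf0, hfe⟩
    have hα0 : α ≠ 0 := by
      intro h; rw [h, norm_zero] at hα; norm_num at hα
    obtain ⟨w, hw⟩ := IsAlgClosed.exists_pow_nat_eq α (n := k+1) (Nat.succ_pos k)
    have hw0 : w ≠ 0 := by
      intro h; apply hα0; rw [← hw, h, zero_pow (Nat.succ_ne_zero k)]
    have hwn : ‖w‖ = 1 := norm_one_of_pow (norm_nonneg w) (Nat.succ_ne_zero k)
      (by rw [← norm_pow, hw, hα])
    set ζ : ℂ := Complex.exp (2 * (Real.pi : ℂ) * Complex.I / ((k+1 : ℕ) : ℂ)) with hζdef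
    have hζ : IsPrimitiveRoot ζ (k+1) := Complex.isPrimitiveRoot_exp (k+1) (Nat.succ_ne_zero k)
    have hζ0 : ζ ≠ 0 := Complex.exp_ne_zero _
    set β : ℕ → ℂ := fun j => (lam : ℂ) * w * ζ ^ j with hβdef
    have hβ0 : ∀ j, β j ≠ 0 := fun j =>
      mul_ne_zero (mul_ne_zero hlam0 hw0) (pow_ne_zero _ hζ0)
    have hζn : ‖ζ‖ = 1 := norm_one_of_pow (norm_nonneg ζ) (Nat.succ_ne_zero k)
      (by rw [← norm_pow, hζ.pow_eq_one, norm_one])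
    have hβnorm : ∀ j, ‖β j‖ = lam := by
      intro j
      simp only [hβdef, norm_mul, norm_pow, hwn, hζn, Complex.norm_real, Real.norm_eq_abs,
        abs_of_pos hHA.lam_pos, one_pow, mul_one]
    have hβpow : ∀ j, β j ^ (k+1) = (lam : ℂ) ^ (k+1) * α := by
      intro j
      calc β j ^ (k+1) = (lam : ℂ) ^ (k+1) * w ^ (k+1) * (ζ ^ (k+1)) ^ j := by
            simp only [hβdef, mul_pow]
            rw [← pow_right_comm]
        _ = (lam : ℂ) ^ (k+1) * α := by rw [hw, hζ.pow_eq_one, one_pow, mul_one]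
    set F : ℕ → M → ℂ :=
      fun j x => ∑ m ∈ Finset.range (k+1), (β j)⁻¹ ^ m * (PC φ κ)^[m] f x with hFdef
    have hFbdd : ∀ j, BddMeasC (F j) := fun j =>
      bddMeasC_sum _ (fun m => bddMeasC_iter hS hSF hf m) _ _
    have hsumF : ∀ x, ∑ j ∈ Finset.range (k+1), F j x = ((k : ℂ) + 1) * f x := by
      intro x
      simp only [hFdef]
      rw [Finset.sum_comm]
      have hside : ∀ m ∈ Finset.range (k+1), m ≠ 0 →
          ∑ j ∈ Finset.range (k+1), (β j)⁻¹ ^ m * (PC φ κ)^[m] f x = 0 := by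
        intro m hm hm0
        have hζm : (ζ ^ m)⁻¹ ≠ 1 := fun heq =>
          hζ.pow_ne_one_of_pos_of_lt hm0 (Finset.mem_range.1 hm)
            (inv_eq_one.mp heq)
        have hre : ∀ j, (β j)⁻¹ ^ m = (((lam : ℂ) * w)⁻¹) ^ m * ((ζ ^ m)⁻¹) ^ j := by
          intro j
          simp only [hβdef]
          rw [mul_inv, mul_pow]
          congr 1
          rw [inv_pow, inv_pow, pow_right_comm ζ j m]
        calc ∑ j ∈ Finset.range (k+1), (β j)⁻¹ ^ m * (PC φ κ)^[m] f x
            = ∑ j ∈ Finset.range (k+1),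
                (((lam : ℂ) * w)⁻¹) ^ m * ((ζ ^ m)⁻¹) ^ j * (PC φ κ)^[m] f x :=
              Finset.sum_congr rfl fun j _ => by rw [hre j]
          _ = (((lam : ℂ) * w)⁻¹) ^ m * (∑ j ∈ Finset.range (k+1), ((ζ ^ m)⁻¹) ^ j)
                * (PC φ κ)^[m] f x := by
              rw [← Finset.sum_mul, ← Finset.mul_sum]
          _ = 0 := by
              rw [geom_sum_eq hζm]
              have h1 : ((ζ ^ m)⁻¹) ^ (k+1) = 1 := by
                rw [inv_pow, pow_right_comm ζ m (k+1), hζ.pow_eq_one, one_pow, inv_one]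
              rw [h1]
              simp
      rw [Finset.sum_eq_single_of_mem 0 (Finset.mem_range.2 (Nat.succ_pos k)) hside]
      simp only [pow_zero, one_mul, Function.iterate_zero, id_eq, Finset.sum_const,
        Finset.card_range, nsmul_eq_mul]
      push_cast
      ring
    have hex : ∃ j, ¬ (F j =ᵐ[μ] 0) := by
      by_contra h
      push_neg at h
      apply hf0
      have hall : ∀ᵐ x ∂μ, ∀ j : ℕ, F j x = 0 :=
        ae_all_iff.2 fun j => (h j).mono fun x hx => by simpa using hx
      filter_upwards [hall] with x hx
      have h1 := hsumF x
      rw [Finset.sum_eq_zero (fun j _ => hx j)] at h1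
      have hk0 : ((k : ℂ) + 1) ≠ 0 := by
        have : ((k + 1 : ℕ) : ℂ) ≠ 0 := Nat.cast_ne_zero.2 (Nat.succ_ne_zero k)
        push_cast at this
        exact this
      simpa using (mul_eq_zero.1 h1.symm).resolve_left hk0
    obtain ⟨j, hFne⟩ := hex
    have hPFeq : PC φ κ (F j)
        = fun x => ∑ m ∈ Finset.range (k+1), (β j)⁻¹ ^ m * (PC φ κ)^[m+1] f x := by
      simp only [hFdef]
      rw [PC_sum_s14 hS (fun m => (PC φ κ)^[m] f) (fun m => bddMeasC_iter hS hSF hf m)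
        (fun m => (β j)⁻¹ ^ m) (k+1)]
      funext x
      exact Finset.sum_congr rfl fun m _ => by
        rw [Function.iterate_succ_apply' (PC φ κ) m f]
    have hPF : PC φ κ (F j) =ᵐ[μ] fun x => β j * F j x := by
      rw [hPFeq]
      filter_upwards [hfe] with x hx
      exact cyclic_alg (hβ0 j) k (fun m => (PC φ κ)^[m] f x) (by
        show (PC φ κ)^[k+1] f x = β j ^ (k+1) * ((PC φ κ)^[0] f x)
        rw [hβpow j]
        simpa using hx)
    obtain ⟨j', hj', hβeq⟩ := (hk (β j)).1 ⟨hβnorm j, F j, hFbdd j, hFne, hPF⟩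
    have hroot : rootU k j' ^ (k+1) = rootU k j' := by
      rw [pow_succ, rootU_pow_self (by omega) j', one_mul]
    have hαeq : α = rootU k j' := by
      have h1 : (lam : ℂ) ^ (k+1) * α = (lam : ℂ) ^ (k+1) * rootU k j' := by
        rw [← hβpow j, hβeq, mul_pow, hroot]
      exact mul_left_cancel₀ (pow_ne_zero _ hlam0) h1
    have hβα : (lam : ℂ) * α = β j := by rw [hβeq, hαeq]
    refine ⟨F j, hFbdd j, hFne, ?_⟩
    filter_upwards [hPF] with x hx
    rw [hx, hβα]
  · -- easy direction
    rintro ⟨f, hf, hf0, hfe⟩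
    have hnorm : ‖(lam : ℂ) * α‖ = lam := by
      rw [norm_mul, hα, mul_one, Complex.norm_real, Real.norm_eq_abs,
        abs_of_pos hHA.lam_pos]
    obtain ⟨j, hj, he⟩ := (hk _).1 ⟨hnorm, f, hf, hf0, hfe⟩
    have hαr : α = rootU k j := mul_left_cancel₀ hlam0 he
    have hαk : α ^ k = 1 := by rw [hαr]; exact rootU_pow_self (by omega) j
    refine ⟨f, hf, hf0, ?_⟩
    have hit := iter_eigen hS hfe (k+1)
    filter_upwards [hit] with x hx
    rw [hx, mul_pow, pow_succ α, hαk, one_mul]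


end

end QEM
end
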